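/- Suppose (r, r′) ∈ ℂ² \ (L_even ∪ L_odd). Then for every diagonal sequence s for (r, r′) there exists a unique admissible solution t for (r, r′) such that t(α, α) = s(α) for all α ∈ ℕ. -/
import Mathlib


noncomputable section

/-- ρ = (n-1)/2 as a complex number. -/
def rho (n : ℕ) : ℂ := ((n : ℂ) - 1) / 2

/-- ρ' = (n-2)/2 as a complex number. -/
def rho' (n : ℕ) : ℂ := ((n : ℂ) - 2) / 2

/-- A diagonal sequence for `(r, r')`. -/
def IsDiagSeq (n : ℕ) (r r' : ℂ) (s : ℕ → ℂ) : Prop :=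
  ∀ α : ℕ, (2*r' + 2*(α : ℂ) + (n : ℂ) - 2) * s α
    = (2*r + 2*(α : ℂ) + (n : ℂ) - 1) * s (α + 1)

/-- L_even. -/
def Leven (n : ℕ) : Set (ℂ × ℂ) :=
  {p | ∃ i j : ℕ, p.1 = -rho n - (i : ℂ) ∧ p.2 = -rho' n - (j : ℂ) ∧ ∃ k : ℕ, i = j + 2*k}

/-- L_odd. -/
def Lodd (n : ℕ) : Set (ℂ × ℂ) :=
  {p | ∃ i j : ℕ, p.1 = -rho n - (i : ℂ) ∧ p.2 = -rho' n - (j : ℂ) ∧ ∃ k : ℕ, i = j + 2*k + 1}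

/-- An admissible solution `t : ℕ × ℕ → ℂ` for `(r, r')`:
`t(α,α') = 0` when `α' > α` or `α − α'` is odd (equivalently `α + α'` is odd),
and the relations (R1), (R2) hold for all `α ≥ α'` with `α − α'` even.
The natural-subtraction index `α - 1` is harmless, since in (R1) its coefficient
`(α − α')` vanishes when `α = α'`, and in (R2) we have `α ≥ α' ≥ 1`. -/
def IsAdmissible (n : ℕ) (r r' : ℂ) (t : ℕ → ℕ → ℂ) : Prop :=
  (∀ α α' : ℕ, (α < α' ∨ Odd (α + α')) → t α α' = 0) ∧
  (∀ α α' : ℕ, α' ≤ α → Even (α + α') →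
    ((2*(α : ℂ) + (n : ℂ) - 2) * (2*r' + 2*(α' : ℂ) + (n : ℂ) - 2) * t α α'
      = ((α : ℂ) + (α' : ℂ) + (n : ℂ) - 2) * (2*r + 2*(α : ℂ) + (n : ℂ) - 1)
          * t (α + 1) (α' + 1)
        + ((α : ℂ) - (α' : ℂ)) * (2*r - 2*(α : ℂ) - (n : ℂ) + 3)
          * t (α - 1) (α' + 1)) ∧
    (1 ≤ α' →
      (2*(α : ℂ) + (n : ℂ) - 2) * (2*r' - 2*(α' : ℂ) - (n : ℂ) + 4) * t α α'
      = ((α : ℂ) - (α' : ℂ) + 1) * (2*r + 2*(α : ℂ) + (n : ℂ) - 1)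
          * t (α + 1) (α' - 1)
        + ((α : ℂ) + (α' : ℂ) + (n : ℂ) - 3) * (2*r - 2*(α : ℂ) - (n : ℂ) + 3)
          * t (α - 1) (α' - 1)))


lemma adm_unique {n : ℕ} (hn : 3 ≤ n) {r r' : ℂ} {t : ℕ → ℕ → ℂ}
    (hBc : ∀ i j : ℕ, j ≤ i → 2*r + 2*(i:ℂ) + (n:ℂ) - 1 = 0 →
      2*r' + 2*(j:ℂ) + (n:ℂ) - 2 ≠ 0)
    (ht : IsAdmissible n r r' t) (h0 : ∀ α, t α α = 0) : ∀ A B, t A B = 0 := by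
  classical
  have main : ∀ N A B : ℕ,
      2*(A - B) + (if 2*r + 2*(A:ℂ) + (n:ℂ) - 3 = 0 then 1 else 0) ≤ N → t A B = 0 := by
    intro N
    induction N with
    | zero =>
      intro A B h
      by_cases hsupp : A < B ∨ Odd (A + B)
      · exact ht.1 A B hsupp
      · by_cases hd : A = B
        · subst hd; exact h0 A
        · exfalso
          have hAB : B + 2 ≤ A := by
            rcases Nat.even_or_odd (A + B) with he | ho
            · omega
            · exact absurd (Or.inr ho) hsupp
          omega
    | succ N ih =>
      intro A B h
      by_cases hsupp : A < B ∨ Odd (A + B)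
      · exact ht.1 A B hsupp
      · by_cases hd : A = B
        · subst hd; exact h0 A
        · have heven : Even (A + B) := by
            rcases Nat.even_or_odd (A + B) with he | ho
            · exact he
            · exact absurd (Or.inr ho) hsupp
          have hAB : B + 2 ≤ A := by
            have := Nat.even_iff.mp heven; omega
          obtain ⟨k, rfl⟩ : ∃ k, A = B + 2*k + 2 :=
            ⟨(A - B - 2)/2, by have := Nat.even_iff.mp heven; omega⟩
          have hb1 : (if 2*r + 2*((B+2*k+1:ℕ):ℂ) + (n:ℂ) - 3 = 0 then 1 else 0) ≤ 1 := by
            split <;> omega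
          have hb2 : (if 2*r + 2*((B+2*k:ℕ):ℂ) + (n:ℂ) - 3 = 0 then 1 else 0) ≤ 1 := by
            split <;> omega
          have iha : t (B+2*k+1) (B+1) = 0 := ih (B+2*k+1) (B+1) (by omega)
          have ihb : t (B+2*k) B = 0 := ih (B+2*k) B (by omega)
          by_cases hc : 2*r + 2*((B+2*k+2:ℕ):ℂ) + (n:ℂ) - 3 = 0
          · -- use (R1) at (A, B)
            have hfalse : ¬ (2*r + 2*((B+2*k+3:ℕ):ℂ) + (n:ℂ) - 3 = 0) := by
              push_cast at hc ⊢
              intro hcon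
              have : (2:ℂ) = 0 := by linear_combination hcon - hc
              norm_num at this
            have ihc : t (B+2*k+3) (B+1) = 0 := by
              apply ih (B+2*k+3) (B+1)
              rw [if_neg hfalse]
              have hpos1 : (if 2*r + 2*((B+2*k+2:ℕ):ℂ) + (n:ℂ) - 3 = 0 then 1 else 0) = 1 :=
                if_pos hc
              omega
            have h1 := (ht.2 (B+2*k+2) B (by omega) (Nat.even_iff.mpr (by have := Nat.even_iff.mp heven; omega))).1
            rw [show B+2*k+2+1 = B+2*k+3 from by omega,
                show B+2*k+2-1 = B+2*k+1 from by omega] at h1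
            rw [ihc, iha] at h1
            have h2 : ((2*((B+2*k+2:ℕ):ℂ) + (n:ℂ) - 2) * (2*r' + 2*(B:ℂ) + (n:ℂ) - 2))
                * t (B+2*k+2) B = 0 := by
              linear_combination h1
            have hcne : (2*((B+2*k+2:ℕ):ℂ) + (n:ℂ) - 2) * (2*r' + 2*(B:ℂ) + (n:ℂ) - 2) ≠ 0 := by
              apply mul_ne_zero
              · have : 2*((B+2*k+2:ℕ):ℂ) + (n:ℂ) - 2 = ((2*B+4*k+2+n:ℕ):ℂ) := by
                  push_cast; ring
                rw [this]; exact Nat.cast_ne_zero.mpr (by omega)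
              · apply hBc (B+2*k+1) B (by omega)
                push_cast at hc ⊢
                linear_combination hc
            exact (mul_eq_zero.mp h2).resolve_left hcne
          · -- use (R2) at (B+2k+1, B+1)
            have h1 := (ht.2 (B+2*k+1) (B+1) (by omega)
              (Nat.even_iff.mpr (by have := Nat.even_iff.mp heven; omega))).2 (by omega)
            rw [show B+2*k+1+1 = B+2*k+2 from by omega, show B+1-1 = B from by omega,
                show B+2*k+1-1 = B+2*k from by omega] at h1
            rw [iha, ihb] at h1
            have h2 : ((((B+2*k+1:ℕ):ℂ) - ((B+1:ℕ):ℂ) + 1) * (2*r + 2*((B+2*k+1:ℕ):ℂ) + (n:ℂ) - 1))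
                * t (B+2*k+2) B = 0 := by
              linear_combination -h1
            have hcne : (((B+2*k+1:ℕ):ℂ) - ((B+1:ℕ):ℂ) + 1) * (2*r + 2*((B+2*k+1:ℕ):ℂ) + (n:ℂ) - 1) ≠ 0 := by
              apply mul_ne_zero
              · have : ((B+2*k+1:ℕ):ℂ) - ((B+1:ℕ):ℂ) + 1 = ((2*k+1:ℕ):ℂ) := by push_cast; ring
                rw [this]; exact Nat.cast_ne_zero.mpr (by omega)
              · intro hcon
                apply hc
                push_cast at hcon ⊢
                linear_combination hcon
            exact (mul_eq_zero.mp h2).resolve_left hcne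
  intro A B
  exact main (2*(A-B) + (if 2*r + 2*(A:ℂ) + (n:ℂ) - 3 = 0 then 1 else 0)) A B le_rfl


open Classical in
noncomputable def T (x y nc : ℂ) (s : ℕ → ℂ) : ℕ → ℕ → ℂ
  | A, B =>
    if A < B ∨ (A + B) % 2 = 1 then 0
    else if A = B then s A
    else if x + 2*(A:ℂ) - 2 ≠ 0 then
      ((2*(A:ℂ) + nc - 2) * (y - 2*(B:ℂ) - 2*nc) * T x y nc s (A-1) (B+1)
        - ((A:ℂ) + (B:ℂ) + nc - 1) * (x - 2*(A:ℂ) - 2*nc + 2) * T x y nc s (A-2) B)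
      / (((A:ℂ) - (B:ℂ) - 1) * (x + 2*(A:ℂ) - 2))
    else
      (((A:ℂ) + (B:ℂ) + nc) * (x + 2*(A:ℂ)) * T x y nc s (A+1) (B+1)
        + ((A:ℂ) - (B:ℂ)) * (x - 2*(A:ℂ) - 2*nc) * T x y nc s (A-1) (B+1))
      / ((2*(A:ℂ) + nc) * (y + 2*(B:ℂ)))
  termination_by A B => 2*(A - B) + (if x + 2*(A:ℂ) - 2 = 0 then 1 else 0)
  decreasing_by
  · have hAB : B + 2 ≤ A := by omega
    have h1 : (if x + 2*((A-1:ℕ):ℂ) - 2 = 0 then 1 else 0) ≤ 1 := by split <;> omega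
    have h2 : (0:ℕ) ≤ (if x + 2*((A:ℕ):ℂ) - 2 = 0 then 1 else 0) := by omega
    omega
  · have hAB : B + 2 ≤ A := by omega
    have h1 : (if x + 2*((A-2:ℕ):ℂ) - 2 = 0 then 1 else 0) ≤ 1 := by split <;> omega
    omega
  · have hAB : B + 2 ≤ A := by omega
    rename_i hg1 hg2 hx
    have hx0 : x + 2*(A:ℂ) - 2 = 0 := by by_contra hc; exact hx hc
    have hcond : ¬ (x + 2*((A+1:ℕ):ℂ) - 2 = 0) := by
      push_cast
      intro h
      have : (2:ℂ) = 0 := by linear_combination h - hx0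
      norm_num at this
    rw [if_neg hcond, if_pos hx0]
    omega
  · have hAB : B + 2 ≤ A := by omega
    have h1 : (if x + 2*((A-1:ℕ):ℂ) - 2 = 0 then 1 else 0) ≤ 1 := by split <;> omega
    omega

lemma T_supp (x y nc : ℂ) (s : ℕ → ℂ) (A B : ℕ) (h : A < B ∨ (A + B) % 2 = 1) :
    T x y nc s A B = 0 := by
  rw [T, if_pos h]

lemma T_diag (x y nc : ℂ) (s : ℕ → ℂ) (A : ℕ) : T x y nc s A A = s A := by
  rw [T, if_neg (by omega), if_pos rfl]

section Main
variable {x y nc : ℂ} {s : ℕ → ℂ}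
variable (hB : ∀ i j : ℕ, j ≤ i → x + 2*(i:ℂ) = 0 → y + 2*(j:ℂ) ≠ 0)
variable (hs : ∀ α : ℕ, (y + 2*(α:ℂ)) * s α = (x + 2*(α:ℂ)) * s (α+1))

include hB hs in
lemma s_zero (m : ℕ) (hm : x + 2*(m:ℂ) = 0) : ∀ A : ℕ, A ≤ m → s A = 0 := by
  have key : ∀ i A : ℕ, A + i = m → s A = 0 := by
    intro i
    induction i with
    | zero =>
      intro A hA
      subst hA
      have hm' : x + 2*(A:ℂ) = 0 := by push_cast at hm ⊢; linear_combination hm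
      have h := hs A
      rw [hm'] at h
      simp only [zero_mul] at h
      exact (mul_eq_zero.mp h).resolve_left (hB A A le_rfl hm')
    | succ i ih =>
      intro A hA
      have hnext : s (A+1) = 0 := ih (A+1) (by omega)
      have h := hs A
      rw [hnext, mul_zero] at h
      exact (mul_eq_zero.mp h).resolve_left (hB m A (by omega) hm)
  intro A hA
  exact key (m - A) A (by omega)

include hB hs in
lemma T_zero (m : ℕ) (hm : x + 2*(m:ℂ) = 0) : ∀ A B : ℕ, A ≤ m → T x y nc s A B = 0 := by
  intro A
  induction A using Nat.strong_induction_on with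
  | _ A ih =>
    intro B hA
    by_cases hsupp : A < B ∨ (A + B) % 2 = 1
    · exact T_supp x y nc s A B hsupp
    · by_cases hdiag : A = B
      · subst hdiag
        rw [T_diag]
        exact s_zero hB hs m hm A hA
      · have hAB : B + 2 ≤ A := by omega
        have hx : x + 2*(A:ℂ) - 2 ≠ 0 := by
          intro h
          have hc : (A:ℂ) = ((m+1:ℕ):ℂ) := by push_cast; linear_combination (h - hm)/2
          have : A = m + 1 := Nat.cast_injective hc
          omega
        rw [T, if_neg hsupp, if_neg hdiag, if_pos hx]
        rw [ih (A-1) (by omega) (B+1) (by omega), ih (A-2) (by omega) B (by omega)]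
        simp

variable (hpos : ∀ c : ℕ, (c:ℂ) + nc ≠ 0)

include hB hs in
/-- Relation (R2) at `(α, α') = (γ+1+2k, γ+1)`. -/
lemma T_R2 (k γ : ℕ) :
    (2*((γ:ℂ)+1+2*k) + nc) * (y - 2*((γ:ℂ)+1) - 2*nc + 2) * T x y nc s (γ+1+2*k) (γ+1)
    = (2*(k:ℂ)+1) * (x + 2*((γ:ℂ)+1+2*k)) * T x y nc s (γ+2+2*k) γ
      + (((γ:ℂ)+1+2*k) + ((γ:ℂ)+1) + nc - 1) * (x - 2*((γ:ℂ)+1+2*k) - 2*nc)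
        * T x y nc s (γ+2*k) γ := by
  by_cases hx : x + 2*((γ:ℂ)+1+2*(k:ℂ)) = 0
  · -- degenerate: everything with first index ≤ γ+1+2k vanishes
    have hm : x + 2*((γ+1+2*k : ℕ):ℂ) = 0 := by push_cast; linear_combination hx
    rw [T_zero hB hs _ hm (γ+1+2*k) (γ+1) le_rfl,
        T_zero hB hs _ hm (γ+2*k) γ (by omega)]
    rw [show x + 2*((γ:ℂ)+1+2*(k:ℂ)) = 0 from hx]
    ring
  · -- main: unfold the definition of `T (γ+2+2k) γ`
    have hxc : x + 2*((γ+2+2*k:ℕ):ℂ) - 2 ≠ 0 := by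
      push_cast; intro h; exact hx (by linear_combination h)
    have e1 : γ+2+2*k-1 = γ+1+2*k := by omega
    have e2 : γ+2+2*k-2 = γ+2*k := by omega
    have hT : T x y nc s (γ+2+2*k) γ =
      ((2*((γ+2+2*k:ℕ):ℂ) + nc - 2) * (y - 2*(γ:ℂ) - 2*nc) * T x y nc s (γ+1+2*k) (γ+1)
        - (((γ+2+2*k:ℕ):ℂ) + (γ:ℂ) + nc - 1) * (x - 2*((γ+2+2*k:ℕ):ℂ) - 2*nc + 2)
          * T x y nc s (γ+2*k) γ)
      / ((((γ+2+2*k:ℕ):ℂ) - (γ:ℂ) - 1) * (x + 2*((γ+2+2*k:ℕ):ℂ) - 2)) := by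
      rw [T, if_neg (by omega), if_neg (by omega), if_pos hxc, e1, e2]
    have hden : (((γ+2+2*k:ℕ):ℂ) - (γ:ℂ) - 1) * (x + 2*((γ+2+2*k:ℕ):ℂ) - 2) ≠ 0 := by
      apply mul_ne_zero _ hxc
      have h1 : (((γ+2+2*k:ℕ):ℂ) - (γ:ℂ) - 1) = ((2*k+1:ℕ):ℂ) := by push_cast; ring
      rw [h1]
      exact Nat.cast_ne_zero.mpr (by omega)
    have hT2 : (((γ+2+2*k:ℕ):ℂ) - (γ:ℂ) - 1) * (x + 2*((γ+2+2*k:ℕ):ℂ) - 2)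
        * T x y nc s (γ+2+2*k) γ
      = (2*((γ+2+2*k:ℕ):ℂ) + nc - 2) * (y - 2*(γ:ℂ) - 2*nc) * T x y nc s (γ+1+2*k) (γ+1)
        - (((γ+2+2*k:ℕ):ℂ) + (γ:ℂ) + nc - 1) * (x - 2*((γ+2+2*k:ℕ):ℂ) - 2*nc + 2)
          * T x y nc s (γ+2*k) γ := by
      rw [hT, mul_comm]
      exact div_mul_cancel₀ _ hden
    push_cast at hT2 ⊢
    linear_combination -hT2

include hB hs hpos in
/-- Relation (R1) at `(α, α') = (b+2k, b)`. -/
lemma T_R1 (k : ℕ) : ∀ b : ℕ,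
    (2*((b:ℂ)+2*(k:ℂ)) + nc) * (y + 2*(b:ℂ)) * T x y nc s (b+2*k) b
    = (((b:ℂ)+2*(k:ℂ)) + (b:ℂ) + nc) * (x + 2*((b:ℂ)+2*(k:ℂ))) * T x y nc s (b+2*k+1) (b+1)
      + (2*(k:ℂ)) * (x - 2*((b:ℂ)+2*(k:ℂ)) - 2*nc) * T x y nc s (b+2*k-1) (b+1) := by
  induction k with
  | zero =>
    intro b
    rw [show b+2*0 = b from by omega]
    rw [T_diag, T_diag, T_supp x y nc s (b-1) (b+1) (Or.inl (by omega))]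
    push_cast
    linear_combination (2*(b:ℂ)+nc) * hs b
  | succ e ih =>
    intro b
    rw [show b+2*(e+1) = b+2*e+2 from by omega]
    rw [show b+2*e+2+1 = b+2*e+3 from by omega, show b+2*e+2-1 = b+2*e+1 from by omega]
    by_cases hx1 : x + 2*((b:ℂ)+2*(e:ℂ)+1) = 0
    · -- `T (b+2e+2) b` was defined through (R1) itself
      have hxc : ¬ (x + 2*((b+2*e+2:ℕ):ℂ) - 2 ≠ 0) := by
        push_cast
        intro h
        exact h (by linear_combination hx1)
      have i1 : b+2*e+2-1 = b+2*e+1 := by omega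
      have i2 : b+2*e+2+1 = b+2*e+3 := by omega
      have hT : T x y nc s (b+2*e+2) b =
        ((((b+2*e+2:ℕ):ℂ) + (b:ℂ) + nc) * (x + 2*((b+2*e+2:ℕ):ℂ)) * T x y nc s (b+2*e+3) (b+1)
          + (((b+2*e+2:ℕ):ℂ) - (b:ℂ)) * (x - 2*((b+2*e+2:ℕ):ℂ) - 2*nc) * T x y nc s (b+2*e+1) (b+1))
        / ((2*((b+2*e+2:ℕ):ℂ) + nc) * (y + 2*(b:ℂ))) := by
        rw [T, if_neg (by omega), if_neg (by omega), if_neg hxc, i1, i2]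
      have hy : y + 2*(b:ℂ) ≠ 0 := by
        apply hB (b+2*e+1) b (by omega)
        push_cast
        linear_combination hx1
      have hden : (2*((b+2*e+2:ℕ):ℂ) + nc) * (y + 2*(b:ℂ)) ≠ 0 := by
        apply mul_ne_zero _ hy
        have h1 : 2*((b+2*e+2:ℕ):ℂ) + nc = ((2*b+4*e+4:ℕ):ℂ) + nc := by push_cast; ring
        rw [h1]; exact hpos _
      have hT2 : (2*((b+2*e+2:ℕ):ℂ) + nc) * (y + 2*(b:ℂ)) * T x y nc s (b+2*e+2) b
        = (((b+2*e+2:ℕ):ℂ) + (b:ℂ) + nc) * (x + 2*((b+2*e+2:ℕ):ℂ)) * T x y nc s (b+2*e+3) (b+1)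
          + (((b+2*e+2:ℕ):ℂ) - (b:ℂ)) * (x - 2*((b+2*e+2:ℕ):ℂ) - 2*nc) * T x y nc s (b+2*e+1) (b+1) := by
        rw [hT, mul_comm]
        exact div_mul_cancel₀ _ hden
      push_cast at hT2 ⊢
      linear_combination hT2
    · -- generic: use the five-term consistency identity
      rcases e with _ | e'
      · -- e = 0, i.e. level d = 1
        have E1 := T_R2 (nc := nc) (s := s) hB hs 0 (b+1)
        have E2 := T_R2 (nc := nc) (s := s) hB hs 0 b
        have H1 := ih (b+1)
        have H2 := ih b
        rw [show b+1+1 = b+2 from by omega, show b+2+2*0 = b+2 from by omega,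
            show b+1+2+2*0 = b+3 from by omega, show b+1+2*0 = b+1 from by omega] at E1
        rw [show b+1+2*0 = b+1 from by omega, show b+2+2*0 = b+2 from by omega,
            show b+2*0 = b from by omega] at E2
        rw [show b+1+2*0 = b+1 from by omega] at H1
        rw [show b+1+1 = b+2 from by omega, show b+1-1 = b from by omega] at H1
        rw [show b+2*0 = b from by omega] at H2
        rw [show b+2*0+2 = b+2 from by omega, show b+2*0+3 = b+3 from by omega,
            show b+2*0+1 = b+1 from by omega]
        have hC : (x + 2*((b:ℂ)+2*(0:ℕ)+1)) * (2*(b:ℂ)+4*(0:ℕ)+nc) * (2*((0:ℕ):ℂ)+1) ≠ 0 := by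
          apply mul_ne_zero (mul_ne_zero _ _)
          · norm_num
          · intro h; apply hx1; push_cast at h ⊢; linear_combination h
          · have : 2*(b:ℂ)+4*((0:ℕ):ℂ)+nc = ((2*b+4*0:ℕ):ℂ) + nc := by push_cast; ring
            rw [this]; exact hpos _
        push_cast at E1 E2 H1 H2 hC ⊢
        have key : (x + 2*((b:ℂ)+2*0+1)) * (2*(b:ℂ)+4*0+nc) * (2*(0:ℂ)+1) *
            ((2*((b:ℂ)+2*0+2) + nc) * (y + 2*(b:ℂ)) * T x y nc s (b+2) b
             - (((b:ℂ)+2*0+2) + (b:ℂ) + nc) * (x + 2*((b:ℂ)+2*0+2)) * T x y nc s (b+3) (b+1)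
             - (2*(0:ℂ)+2) * (x - 2*((b:ℂ)+2*0+2) - 2*nc) * T x y nc s (b+1) (b+1)) = 0 := by
          linear_combination
            ((x+2*((b:ℂ)+2)-2)*(2*((b:ℂ)+2)+nc-4)*(((b:ℂ)+2)+(b:ℂ)+nc)) * E1
            - ((y+2*(b:ℂ))*(2*((b:ℂ)+2)+nc-4)*(2*((b:ℂ)+2)+nc)) * E2
            + ((y-2*(b:ℂ)-2*nc-2)*(2*((b:ℂ)+2)+nc-4)*(2*((b:ℂ)+2)+nc)) * H1
            - ((x-2*((b:ℂ)+2)-2*nc+2)*(((b:ℂ)+2)+(b:ℂ)+nc-1)*(2*((b:ℂ)+2)+nc)) * H2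
        have h0 := (mul_eq_zero.mp key).resolve_left hC
        linear_combination h0
      · -- e = e'+1, level d ≥ 2
        have E1 := T_R2 (nc := nc) (s := s) hB hs (e'+1) (b+1)
        have E2 := T_R2 (nc := nc) (s := s) hB hs (e'+1) b
        have E3 := T_R2 (nc := nc) (s := s) hB hs e' (b+1)
        have H1 := ih (b+1)
        have H2 := ih b
        rw [show b+1+1+2*(e'+1) = b+2*e'+4 from by omega, show b+1+1 = b+2 from by omega,
            show b+1+2+2*(e'+1) = b+2*e'+5 from by omega,
            show b+1+2*(e'+1) = b+2*e'+3 from by omega] at E1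
        rw [show b+1+2*(e'+1) = b+2*e'+3 from by omega,
            show b+2+2*(e'+1) = b+2*e'+4 from by omega,
            show b+2*(e'+1) = b+2*e'+2 from by omega] at E2
        rw [show b+1+1+2*e' = b+2*e'+2 from by omega, show b+1+1 = b+2 from by omega,
            show b+1+2+2*e' = b+2*e'+3 from by omega,
            show b+1+2*e' = b+2*e'+1 from by omega] at E3
        rw [show b+1+2*(e'+1) = b+2*e'+3 from by omega,
            show b+2*e'+3+1 = b+2*e'+4 from by omega,
            show b+2*e'+3-1 = b+2*e'+2 from by omega, show b+1+1 = b+2 from by omega] at H1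
        rw [show b+2*(e'+1) = b+2*e'+2 from by omega,
            show b+2*e'+2+1 = b+2*e'+3 from by omega,
            show b+2*e'+2-1 = b+2*e'+1 from by omega] at H2
        rw [show b+2*(e'+1)+2 = b+2*e'+4 from by omega,
            show b+2*(e'+1)+3 = b+2*e'+5 from by omega,
            show b+2*(e'+1)+1 = b+2*e'+3 from by omega]
        have hC : (x + 2*((b:ℂ)+2*((e'+1:ℕ):ℂ)+1)) * (2*(b:ℂ)+4*((e'+1:ℕ):ℂ)+nc)
            * (2*((e'+1:ℕ):ℂ)+1) ≠ 0 := by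
          apply mul_ne_zero (mul_ne_zero _ _)
          · have h1 : 2*((e'+1:ℕ):ℂ)+1 = ((2*(e'+1)+1:ℕ):ℂ) := by push_cast; ring
            rw [h1]; exact Nat.cast_ne_zero.mpr (by omega)
          · intro h; apply hx1; push_cast at h ⊢; linear_combination h
          · have h1 : 2*(b:ℂ)+4*((e'+1:ℕ):ℂ)+nc = ((2*b+4*(e'+1):ℕ):ℂ) + nc := by push_cast; ring
            rw [h1]; exact hpos _
        push_cast at E1 E2 E3 H1 H2 hC ⊢
        have key : (x + 2*((b:ℂ)+2*((e':ℂ)+1)+1)) * (2*(b:ℂ)+4*((e':ℂ)+1)+nc) * (2*((e':ℂ)+1)+1) *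
            ((2*((b:ℂ)+2*(e':ℂ)+4) + nc) * (y + 2*(b:ℂ)) * T x y nc s (b+2*e'+4) b
             - (((b:ℂ)+2*(e':ℂ)+4) + (b:ℂ) + nc) * (x + 2*((b:ℂ)+2*(e':ℂ)+4)) * T x y nc s (b+2*e'+5) (b+1)
             - (2*(e':ℂ)+4) * (x - 2*((b:ℂ)+2*(e':ℂ)+4) - 2*nc) * T x y nc s (b+2*e'+3) (b+1)) = 0 := by
          linear_combination
            ((x+2*((b:ℂ)+2*(e':ℂ)+4)-2)*(2*((b:ℂ)+2*(e':ℂ)+4)+nc-4)*(((b:ℂ)+2*(e':ℂ)+4)+(b:ℂ)+nc)) * E1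
            - ((y+2*(b:ℂ))*(2*((b:ℂ)+2*(e':ℂ)+4)+nc-4)*(2*((b:ℂ)+2*(e':ℂ)+4)+nc)) * E2
            + ((x-2*((b:ℂ)+2*(e':ℂ)+4)-2*nc+2)*(((b:ℂ)+2*(e':ℂ)+4)-(b:ℂ)-2)*(2*((b:ℂ)+2*(e':ℂ)+4)+nc)) * E3
            + ((y-2*(b:ℂ)-2*nc-2)*(2*((b:ℂ)+2*(e':ℂ)+4)+nc-4)*(2*((b:ℂ)+2*(e':ℂ)+4)+nc)) * H1
            - ((x-2*((b:ℂ)+2*(e':ℂ)+4)-2*nc+2)*(((b:ℂ)+2*(e':ℂ)+4)+(b:ℂ)+nc-1)*(2*((b:ℂ)+2*(e':ℂ)+4)+nc)) * H2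
        have h0 := (mul_eq_zero.mp key).resolve_left hC
        linear_combination h0
end Main

theorem statement2 (n : ℕ) (hn : 3 ≤ n) (r r' : ℂ)
    (hL : (r, r') ∉ Leven n ∪ Lodd n) :
    ∀ s : ℕ → ℂ, IsDiagSeq n r r' s →
      ∃! t : ℕ → ℕ → ℂ, IsAdmissible n r r' t ∧ ∀ α : ℕ, t α α = s α := by
  intro s hses
  classical
  -- pointwise non-degeneracy
  have hBc : ∀ i j : ℕ, j ≤ i → 2*r + 2*(i:ℂ) + (n:ℂ) - 1 = 0 →
      2*r' + 2*(j:ℂ) + (n:ℂ) - 2 ≠ 0 := by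
    intro i j hle hxi hyj
    apply hL
    have hr : r = -rho n - (i:ℂ) := by rw [rho]; field_simp; linear_combination hxi
    have hr' : r' = -rho' n - (j:ℂ) := by rw [rho']; field_simp; linear_combination hyj
    rcases Nat.even_or_odd (i - j) with ⟨k, hk⟩ | ⟨k, hk⟩
    · exact Or.inl ⟨i, j, hr, hr', k, by omega⟩
    · exact Or.inr ⟨i, j, hr, hr', k, by omega⟩
  have hB : ∀ i j : ℕ, j ≤ i → (2*r + (n:ℂ) - 1) + 2*(i:ℂ) = 0 →
      (2*r' + (n:ℂ) - 2) + 2*(j:ℂ) ≠ 0 := by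
    intro i j hle hxi hyj
    exact hBc i j hle (by linear_combination hxi) (by linear_combination hyj)
  have hs' : ∀ α : ℕ, ((2*r' + (n:ℂ) - 2) + 2*(α:ℂ)) * s α
      = ((2*r + (n:ℂ) - 1) + 2*(α:ℂ)) * s (α+1) := by
    intro α
    linear_combination hses α
  have hpos : ∀ c : ℕ, (c:ℂ) + ((n:ℂ) - 2) ≠ 0 := by
    intro c
    have h1 : (c:ℂ) + ((n:ℂ) - 2) = ((c + (n-2) : ℕ):ℂ) := by
      push_cast [Nat.cast_sub (show 2 ≤ n by omega)]
      ring
    rw [h1]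
    exact Nat.cast_ne_zero.mpr (by omega)
  set X := 2*r + (n:ℂ) - 1 with hX
  set Y := 2*r' + (n:ℂ) - 2 with hY
  set NC := (n:ℂ) - 2 with hNC
  have hTadm : IsAdmissible n r r' (T X Y NC s) := by
    constructor
    · intro α α' h
      apply T_supp
      rcases h with h | h
      · exact Or.inl h
      · exact Or.inr (Nat.odd_iff.mp h)
    · intro α α' hle he
      constructor
      · obtain ⟨k, rfl⟩ : ∃ k, α = α' + 2*k :=
          ⟨(α - α')/2, by have := Nat.even_iff.mp he; omega⟩
        have H := T_R1 (x := X) (y := Y) (nc := NC) (s := s) hB hs' hpos k α'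
        rw [hX, hY, hNC] at H
        push_cast at H ⊢
        linear_combination H
      · intro h1
        obtain ⟨γ, rfl⟩ : ∃ γ, α' = γ + 1 := ⟨α' - 1, by omega⟩
        obtain ⟨k, rfl⟩ : ∃ k, α = γ + 1 + 2*k :=
          ⟨(α - (γ+1))/2, by have := Nat.even_iff.mp he; omega⟩
        rw [show γ+1+2*k+1 = γ+2+2*k from by omega, show γ+1-1 = γ from by omega,
            show γ+1+2*k-1 = γ+2*k from by omega]
        have H := T_R2 (nc := NC) (s := s) hB hs' k γ
        rw [hX, hY, hNC] at H
        push_cast at H ⊢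
        linear_combination H
  have hTdiag : ∀ α : ℕ, T X Y NC s α α = s α := fun α => T_diag X Y NC s α
  refine ⟨T X Y NC s, ⟨hTadm, hTdiag⟩, ?_⟩
  rintro t' ⟨ht', hd'⟩
  funext A B
  have hu : IsAdmissible n r r' (fun a b => t' a b - T X Y NC s a b) := by
    constructor
    · intro a b h
      simp only [ht'.1 a b h, hTadm.1 a b h, sub_zero]
    · intro a b hle he
      refine ⟨?_, fun h1b => ?_⟩
      · have h1 := (ht'.2 a b hle he).1
        have h2 := (hTadm.2 a b hle he).1
        simp only []
        linear_combination h1 - h2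
      · have h1 := (ht'.2 a b hle he).2 h1b
        have h2 := (hTadm.2 a b hle he).2 h1b
        simp only []
        linear_combination h1 - h2
  have hz := adm_unique hn hBc hu (fun α => by simp [hd' α, hTdiag α]) A B
  have : t' A B - T X Y NC s A B = 0 := by simpa using hz
  linear_combination this

end
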